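/- arXiv:2602.14015 — 7 statements merged into one kernel-verified Lean document; each statement's English description precedes it below -/
import Mathlib

section
/- For a submonoid M of a monoid A, M equals the zero-class of R_M if and only if condition (R) holds: for all x, y ∈ A and all u ∈ M, x·y = 1 implies x·u·y ∈ M. -/
theorem stmt_5 {A : Type*} [Monoid A] (M : Submonoid A) :
    (M : Set A) = {u : A | ∀ x y : A, x * 1 * y = 1 → x * u * y ∈ M} ↔
      (∀ x y : A, ∀ u ∈ M, x * y = 1 → x * u * y ∈ M) := by
  constructor
  · intro h x y u hu hxy
    have : u ∈ {u : A | ∀ x y : A, x * 1 * y = 1 → x * u * y ∈ M} := h ▸ hu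
    exact this x y (by simpa using hxy)
  · intro h
    ext u
    constructor
    · intro hu x y hxy
      exact h x y u hu (by simpa using hxy)
    · intro hu
      simpa using hu 1 1 (by simp)
end

section
/- Let M be a submonoid of a monoid A. If there exists a reflexive relation S on A, compatible with the monoid operation (a S b and a' S b' imply a·a' S b·b'), whose zero-class {u : 1 S u} equals M, then M equals the zero-class of R_M. -/
theorem stmt_6 {A : Type*} [Monoid A] (M : Submonoid A) (S : A → A → Prop)
    (hrefl : Reflexive S)
    (hcompat : ∀ a b a' b' : A, S a b → S a' b' → S (a * a') (b * b'))
    (hzero : {u : A | S 1 u} = (M : Set A)) :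
    (M : Set A) =
      {u : A | ∀ x y : A, x * 1 * y = 1 → x * u * y ∈ M} := by
  ext u
  constructor
  · intro hu x y hxy
    have h1u : S 1 u := by rw [← hzero] at hu; exact hu
    have : S (x * 1 * y) (x * u * y) :=
      hcompat _ _ _ _ (hcompat _ _ _ _ (hrefl x) h1u) (hrefl y)
    rw [hxy] at this
    have hm : x * u * y ∈ {u : A | S 1 u} := this
    rw [hzero] at hm
    exact hm
  · intro hu
    have := hu 1 1 (by simp)
    simpa using this
end

section
/- Let M be a submonoid of a monoid A such that M satisfies condition (R) (for all x, y ∈ A and u ∈ M, x·y = 1 implies x·u·y ∈ M) and such that R_M is compatible with multiplication. Then M is a clot, i.e., M is the zero-class of a reflexive multiplicative relation on A, namely R_M itself. -/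
theorem stmt_7 {A : Type*} [Monoid A] (M : Submonoid A)
    (hR : ∀ x y : A, ∀ u ∈ M, x * y = 1 → x * u * y ∈ M)
    (hcompat : ∀ a b a' b' : A,
      (∀ x y : A, x * a * y = 1 → x * b * y ∈ M) →
      (∀ x y : A, x * a' * y = 1 → x * b' * y ∈ M) →
      (∀ x y : A, x * (a * a') * y = 1 → x * (b * b') * y ∈ M)) :
    ∃ S : A → A → Prop, Reflexive S ∧
      (∀ a b a' b' : A, S a b → S a' b' → S (a * a') (b * b')) ∧
      (M : Set A) = {u : A | S 1 u} ∧
      S = fun a b : A => ∀ x y : A, x * a * y = 1 → x * b * y ∈ M := by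
  refine ⟨fun a b => ∀ x y : A, x * a * y = 1 → x * b * y ∈ M,
    fun a x y h => h ▸ M.one_mem, hcompat, ?_, rfl⟩
  ext u
  constructor
  · intro hu x y h
    exact hR x y u hu (by simpa using h)
  · intro h
    simpa using h 1 1 (by simp)
end

section
/- If A is a group and M is a submonoid of A, then M equals the zero-class of R_M if and only if M is closed under conjugation (for all a ∈ A and u ∈ M, a·u·a⁻¹ ∈ M). -/
theorem stmt_8 {A : Type*} [Group A] (M : Submonoid A) :
    (M : Set A) = {u : A | ∀ x y : A, x * 1 * y = 1 → x * u * y ∈ M} ↔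
      (∀ a : A, ∀ u ∈ M, a * u * a⁻¹ ∈ M) := by
  constructor
  · intro h a u hu
    have : u ∈ {u : A | ∀ x y : A, x * 1 * y = 1 → x * u * y ∈ M} := h ▸ hu
    exact this a a⁻¹ (by group)
  · intro h
    ext u
    constructor
    · intro hu x y hxy
      have hy : y = x⁻¹ := by
        have h1 : x * y = 1 := by simpa using hxy
        
        exact eq_inv_of_mul_eq_one_right h1
      rw [hy]
      exact h x u hu
    · intro hu
      simpa using hu 1 1 (by group)
end

section
/- Let A be the monoid of all functions ℕ → ℕ under composition and let M be the submonoid generated by the doubling function u(x) = 2x. Then the zero-class of R_M equals {id}, and in particular M is not equal to the zero-class of R_M. -/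
/-- The submonoid of `ℕ → ℕ` (under composition) generated by the doubling
function, i.e. the set of functions `n ↦ 2 ^ k * n`. -/
def doublingM : Set (ℕ → ℕ) := {f | ∃ k : ℕ, f = fun n => 2 ^ k * n}

/-- The relation `R_M` on the monoid of endofunctions of `ℕ` under composition. -/
def funR (f g : ℕ → ℕ) : Prop :=
  ∀ p q : ℕ → ℕ, p ∘ f ∘ q = id → p ∘ g ∘ q ∈ doublingM

lemma zero_class_eq : {g : ℕ → ℕ | funR id g} = {id} := by
  ext g
  simp only [Set.mem_setOf_eq, Set.mem_singleton_iff]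
  constructor
  · intro hg
    have h1 : g ∈ doublingM := by
      have := hg id id rfl
      simpa using this
    obtain ⟨k, hk⟩ := h1
    have h2 := hg (fun n => n - 1) (fun n => n + 1) (by funext n; simp)
    obtain ⟨m, hm⟩ := h2
    have h0 := congrFun hm 0
    simp [hk, Function.comp] at h0
    have hk0 : k = 0 := by
      by_contra hne
      have : 2 ^ k - 1 ≠ 0 := by
        have : 2 ≤ 2 ^ k := by
          calc 2 = 2 ^ 1 := rfl
          _ ≤ 2 ^ k := Nat.pow_le_pow_right (by norm_num) (Nat.one_le_iff_ne_zero.mpr hne)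
        omega
      exact this h0
    funext n
    simp [hk, hk0]
  · rintro rfl
    intro p q hpq
    have : p ∘ id ∘ q = id := hpq
    rw [this]
    exact ⟨0, by funext n; simp⟩

theorem stmt_10 :
    {g : ℕ → ℕ | funR id g} = {id} ∧ doublingM ≠ {g : ℕ → ℕ | funR id g} := by
  refine ⟨zero_class_eq, ?_⟩
  rw [zero_class_eq]
  intro h
  have hmem : (fun n => 2 ^ 1 * n) ∈ doublingM := ⟨1, rfl⟩
  rw [h] at hmem
  have := congrFun hmem 1
  simp at this
end

section
/- Let M be a submonoid of a monoid A satisfying condition (*): for all x, y, s, t ∈ A, if x·y = 1, x·s ∈ M, and t·y ∈ M, then t·s ∈ M. Then the relation R_M is compatible with the monoid operation: a R_M b and a' R_M b' imply a·a' R_M b·b'. -/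
theorem stmt_11 {A : Type*} [Monoid A] (M : Submonoid A)
    (hstar : ∀ x y s t : A, x * y = 1 → x * s ∈ M → t * y ∈ M → t * s ∈ M)
    (a b a' b' : A)
    (hab : ∀ x y : A, x * a * y = 1 → x * b * y ∈ M)
    (hab' : ∀ x y : A, x * a' * y = 1 → x * b' * y ∈ M) :
    ∀ x y : A, x * (a * a') * y = 1 → x * (b * b') * y ∈ M := by
  intro x y h
  have h1 : x * a * a' * y = 1 := by simp only [mul_assoc] at h ⊢; exact h
  have hb' : x * a * b' * y ∈ M := hab' (x * a) y h1
  have hb : x * b * (a' * y) ∈ M := hab x (a' * y)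
    (by simp only [mul_assoc] at h ⊢; exact h)
  have := hstar (x * a) (a' * y) (b' * y) (x * b)
    (by simp only [mul_assoc] at h1 ⊢; exact h1)
    (by simpa [mul_assoc] using hb') hb
  simpa [mul_assoc] using this
end

section
/- Let A be the monoid of all endofunctions of a finite set X with at least two elements, under composition, and let M be the submonoid of bijections X → X. Then M is a normal submonoid (for all f, g ∈ A and u ∈ M, f ∘ g ∈ M ↔ f ∘ u ∘ g ∈ M), but M is not homogeneous: there exists f ∈ A with f ∘ M ≠ M ∘ f (where f ∘ M = {f ∘ u : u ∈ M}). -/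
theorem stmt_18 {X : Type*} [Finite X] (hX : 2 ≤ Nat.card X) :
    (∀ f g : X → X, ∀ u : X → X, Function.Bijective u →
      (Function.Bijective (f ∘ g) ↔ Function.Bijective (f ∘ u ∘ g))) ∧
    (∃ f : X → X,
      {h : X → X | ∃ u : X → X, Function.Bijective u ∧ h = f ∘ u} ≠
      {h : X → X | ∃ u : X → X, Function.Bijective u ∧ h = u ∘ f}) := by
  have hnt : Nontrivial X := Finite.one_lt_card_iff_nontrivial.mp hX
  classical
  constructor
  · intro f g u hu
    constructor
    · intro hfg
      have hf : Function.Bijective f :=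
        Finite.injective_iff_bijective.mp
          (Finite.surjective_iff_bijective.mp hfg.surjective.of_comp).injective
      have hg : Function.Bijective g :=
        Finite.injective_iff_bijective.mp hfg.injective.of_comp
      exact hf.comp (hu.comp hg)
    · intro hfg
      have hf : Function.Bijective f :=
        Finite.injective_iff_bijective.mp
          (Finite.surjective_iff_bijective.mp hfg.surjective.of_comp).injective
      have hug : Function.Bijective (u ∘ g) :=
        Finite.injective_iff_bijective.mp hfg.injective.of_comp
      have hg : Function.Bijective g :=
        Finite.injective_iff_bijective.mp hug.injective.of_comp
      exact hf.comp hg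
  · obtain ⟨a, b, hab⟩ := hnt
    refine ⟨fun _ => a, ?_⟩
    intro heq
    have hmem : (fun _ => b : X → X) ∈
        {h : X → X | ∃ u : X → X, Function.Bijective u ∧ h = u ∘ (fun _ => a)} := by
      refine ⟨Equiv.swap a b, (Equiv.swap a b).bijective, ?_⟩
      funext x
      simp [Equiv.swap_apply_left]
    rw [← heq] at hmem
    obtain ⟨u, hu, hb⟩ := hmem
    have := congrFun hb a
    simp at this
    exact hab this.symm
end
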